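/- For λ > −1, t ∈ ℝ and integer m ≥ 2, let P_n(x;λ) denote the monic orthogonal polynomials of the generalised higher order Freud weight ω(x;t,λ) and β_n(λ) their recurrence coefficients. Then for every n ≥ 1: (i) P_{2n+1}(x;λ) = P_{2n+1}(x;λ+1) + β_{2n}(λ+1) P_{2n−1}(x;λ+1), and (ii) P_{2n}(x;λ) = P_{2n}(x;λ+1) − ( β_{2n}(λ) β_{2n−1}(λ+1) P_{2n−1}′(0;λ) / P_{2n+1}′(0;λ) ) P_{2n−2}(x;λ+1). -/

import Mathlib

open MeasureTheory Real Polynomial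

/-- The generalised higher order Freud weight `ω(x;t,λ) = |x|^{2λ+1} exp(t x² − x^{2m})`. -/
noncomputable def freudWeight (m : ℕ) (lam t x : ℝ) : ℝ :=
  |x| ^ (2 * lam + 1) * Real.exp (t * x ^ 2 - x ^ (2 * m))


lemma fw_nonneg (m : ℕ) (lam t x : ℝ) : 0 ≤ freudWeight m lam t x :=
  mul_nonneg (Real.rpow_nonneg (abs_nonneg x) _) (Real.exp_pos _).le

lemma fw_pos (m : ℕ) (lam t : ℝ) {x : ℝ} (hx : x ≠ 0) : 0 < freudWeight m lam t x :=
  mul_pos (Real.rpow_pos_of_pos (abs_pos.2 hx) _) (Real.exp_pos _)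

lemma fw_even (m : ℕ) (lam t x : ℝ) : freudWeight m lam t (-x) = freudWeight m lam t x := by
  simp [freudWeight, abs_neg, neg_sq, (even_two_mul m).neg_pow]

lemma measurable_abs_rpow (c : ℝ) : Measurable fun x : ℝ => |x| ^ c := by
  have h : (fun x : ℝ => |x| ^ c)
      = Set.piecewise {(0:ℝ)} (fun _ => (0:ℝ) ^ c) (fun x => Real.exp (Real.log |x| * c)) := by
    funext x
    by_cases hx : x = 0
    · simp [hx]
    · rw [Set.piecewise_eq_of_notMem _ _ _ (by simp [hx]),
        ← Real.rpow_def_of_pos (abs_pos.2 hx)]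
  rw [h]
  exact Measurable.piecewise (measurableSet_singleton 0) measurable_const
    ((measurable_abs.log.mul_const c).exp)

lemma fw_meas (m : ℕ) (lam t : ℝ) : Measurable (freudWeight m lam t) :=
  (measurable_abs_rpow _).mul
    ((((measurable_id.pow_const 2).const_mul t).sub (measurable_id.pow_const (2*m))).exp)

lemma fw_shift (m : ℕ) {lam : ℝ} (hlam : -1 < lam) (t x : ℝ) :
    freudWeight m (lam + 1) t x = x ^ 2 * freudWeight m lam t x := by
  unfold freudWeight
  rcases eq_or_ne x 0 with rfl | hx
  · rw [abs_zero, Real.zero_rpow (by linarith : 2*(lam+1)+1 ≠ 0)]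
    ring
  · rw [show 2 * (lam + 1) + 1 = (2*lam+1) + 2 by ring, Real.rpow_add (abs_pos.2 hx),
      show ((2:ℝ) = ((2:ℕ):ℝ)) by norm_num, Real.rpow_natCast, sq_abs]
    ring


lemma fw_core_integrable {m : ℕ} (hm : 2 ≤ m) (t : ℝ) {c : ℝ} (hc : -1 < c) :
    Integrable (fun x : ℝ => |x| ^ c * Real.exp (t * x ^ 2 - x ^ (2 * m))) := by
  have hm1 : (1:ℝ) ≤ ((2 * m : ℕ) : ℝ) := by
    have : (2:ℝ) ≤ (m:ℝ) := by exact_mod_cast hm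
    push_cast; linarith
  set R : ℝ := max 1 (2 * |t|) with hRdef
  have hR1 : (1:ℝ) ≤ R := le_max_left _ _
  have hRt : 2 * |t| ≤ R := le_max_right _ _
  have hR0 : (0:ℝ) ≤ R := by linarith
  have key : ∀ u : ℝ, 0 ≤ u → t * u - 1/2 * u ^ m ≤ |t| * R := by
    intro u hu
    have habs : t * u ≤ |t| * u := mul_le_mul_of_nonneg_right (le_abs_self t) hu
    rcases le_total u R with h | h
    · have h2 : |t| * u ≤ |t| * R := mul_le_mul_of_nonneg_left h (abs_nonneg t)
      nlinarith [pow_nonneg hu m]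
    · have hu1 : (1:ℝ) ≤ u := le_trans hR1 h
      have h1 : u ^ 1 ≤ u ^ (m - 1) := pow_le_pow_right₀ hu1 (by omega)
      have h2 : u * u ^ (m-1) = u ^ m := by
        rw [← pow_succ']; congr 1; omega
      have h3 : u * R ≤ u ^ m := by
        rw [← h2]
        exact mul_le_mul_of_nonneg_left (le_trans h (by simpa using h1)) (by linarith)
      have h5 : (0:ℝ) ≤ |t| * R := mul_nonneg (abs_nonneg t) hR0
      nlinarith
  have hbound : ∀ x : ℝ, Real.exp (t * x^2 - x^(2*m))
      ≤ Real.exp (|t| * R) * Real.exp (-(1/2) * (x^2) ^ m) := by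
    intro x
    rw [← Real.exp_add, Real.exp_le_exp]
    have h := key (x^2) (sq_nonneg x)
    have hxm : x ^ (2*m) = (x^2) ^ m := by rw [pow_mul]
    rw [hxm]; linarith
  have hIoi : IntegrableOn (fun x : ℝ => |x| ^ c * Real.exp (-(1/2) * (x^2) ^ m)) (Set.Ioi 0) := by
    have h := integrableOn_rpow_mul_exp_neg_mul_rpow (p := ((2*m : ℕ) : ℝ)) (s := c) (b := 1/2)
      hc (lt_of_lt_of_le one_pos hm1) (by norm_num)
    apply h.congr_fun ?_ measurableSet_Ioi
    intro x hx
    have hx0 : (0:ℝ) < x := hx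
    show x ^ c * Real.exp (-(1/2) * x ^ (((2*m:ℕ)):ℝ)) = |x| ^ c * Real.exp (-(1/2) * (x^2)^m)
    rw [abs_of_pos hx0, Real.rpow_natCast, pow_mul]
  have hg : Integrable (fun x : ℝ => |x| ^ c * Real.exp (-(1/2) * (x^2) ^ m)) := by
    rw [← integrableOn_univ, ← Set.Iio_union_Ici (a := (0:ℝ)), integrableOn_union,
      integrableOn_Ici_iff_integrableOn_Ioi]
    refine ⟨?_, hIoi⟩
    rw [← (Measure.measurePreserving_neg (volume : Measure ℝ)).integrableOn_comp_preimage
        (Homeomorph.neg ℝ).measurableEmbedding]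
    simp only [Function.comp_def, abs_neg, neg_sq, Set.neg_preimage,
      Set.neg_Iio, neg_zero, neg_neg]
    exact hIoi
  refine Integrable.mono' (hg.const_mul (Real.exp (|t| * R)))
    (((measurable_abs_rpow c).mul
      ((((measurable_id.pow_const 2).const_mul t).sub (measurable_id.pow_const (2*m))).exp)).aestronglyMeasurable)
    (Filter.Eventually.of_forall fun x => ?_)
  have hnn : 0 ≤ |x| ^ c * Real.exp (t * x ^ 2 - x ^ (2*m)) :=
    mul_nonneg (Real.rpow_nonneg (abs_nonneg x) _) (Real.exp_pos _).le
  rw [Real.norm_eq_abs, abs_of_nonneg hnn]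
  calc |x| ^ c * Real.exp (t * x ^ 2 - x ^ (2*m))
      ≤ |x| ^ c * (Real.exp (|t| * R) * Real.exp (-(1/2) * (x^2) ^ m)) :=
        mul_le_mul_of_nonneg_left (hbound x) (Real.rpow_nonneg (abs_nonneg x) c)
    _ = Real.exp (|t| * R) * (|x| ^ c * Real.exp (-(1/2) * (x^2) ^ m)) := by ring



lemma ae_ne_zero : ∀ᵐ x : ℝ, x ≠ 0 := by rw [ae_iff]; simp

lemma fw_poly_integrable {m : ℕ} (hm : 2 ≤ m) {lam : ℝ} (hlam : -1 < lam) (t : ℝ)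
    (p : Polynomial ℝ) :
    Integrable (fun x : ℝ => p.eval x * freudWeight m lam t x) := by
  induction p using Polynomial.induction_on' with
  | add p q hp hq => simpa [add_mul, Pi.add_def] using hp.add hq
  | monomial n a =>
    have hc : (-1:ℝ) < 2 * lam + 1 + n := by
      have : (0:ℝ) ≤ n := Nat.cast_nonneg n
      linarith
    have heq : (fun x : ℝ => eval x (monomial n a) * freudWeight m lam t x)
        = fun x : ℝ => a * x ^ n * freudWeight m lam t x := by
      funext x; simp [eval_monomial]
    rw [heq]
    refine Integrable.mono' ((fw_core_integrable hm t hc).const_mul |a|)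
      ((((measurable_id.pow_const n).const_mul a).mul (fw_meas m lam t)).aestronglyMeasurable)
      ?_
    filter_upwards [ae_ne_zero] with x hx
    have h1 : |x| ^ (2 * lam + 1 + (n:ℝ)) = |x| ^ (2*lam+1) * |x| ^ n := by
      rw [Real.rpow_add (abs_pos.2 hx), Real.rpow_natCast]
    rw [Real.norm_eq_abs]
    unfold freudWeight
    rw [abs_mul, abs_mul, abs_mul,
      abs_of_nonneg (Real.exp_pos (t * x ^ 2 - x ^ (2 * m))).le,
      abs_of_nonneg (Real.rpow_nonneg (abs_nonneg x) _), abs_pow, h1]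
    apply le_of_eq
    ring



lemma fw_pq_integrable {m : ℕ} (hm : 2 ≤ m) {lam : ℝ} (hlam : -1 < lam) (t : ℝ)
    (p q : Polynomial ℝ) :
    Integrable (fun x : ℝ => p.eval x * q.eval x * freudWeight m lam t x) := by
  have := fw_poly_integrable hm hlam t (p * q)
  simpa [eval_mul] using this

section Main

variable (m : ℕ) (hm : 2 ≤ m) (t : ℝ)
variable (P : ℝ → ℕ → Polynomial ℝ) (β : ℝ → ℕ → ℝ)
variable (hmonic : ∀ lam, -1 < lam → ∀ n, (P lam n).Monic)
variable (hdeg : ∀ lam, -1 < lam → ∀ n, (P lam n).natDegree = n)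
variable (horth : ∀ lam, -1 < lam → ∀ j k, j ≠ k →
      ∫ x : ℝ, (P lam j).eval x * (P lam k).eval x * freudWeight m lam t x = 0)
variable (hβpos : ∀ lam, -1 < lam → ∀ n, 1 ≤ n → 0 < β lam n)
variable (hP0 : ∀ lam, -1 < lam → P lam 0 = 1) (hP1 : ∀ lam, -1 < lam → P lam 1 = X)
variable (hrec : ∀ lam, -1 < lam → ∀ n, 1 ≤ n →
      P lam (n + 1) = X * P lam n - C (β lam n) * P lam (n - 1))

include hP0 hP1 hrec in
lemma parity {lam : ℝ} (hlam : -1 < lam) :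
    ∀ n : ℕ, ∀ x : ℝ, (P lam n).eval (-x) = (-1)^n * (P lam n).eval x := by
  intro n
  induction n using Nat.twoStepInduction with
  | zero => intro x; simp [hP0 lam hlam]
  | one => intro x; simp [hP1 lam hlam]
  | more n ih1 ih2 =>
    intro x
    have h := hrec lam hlam (n + 1) (by omega)
    have h1 : n + 1 - 1 = n := by omega
    rw [h1] at h
    rw [h]
    simp only [eval_sub, eval_mul, eval_X, eval_C]
    rw [ih1 x, ih2 x, pow_succ, pow_succ]
    ring

include hP0 hβpos hrec in
lemma eval0_even_ne {lam : ℝ} (hlam : -1 < lam) :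
    ∀ k : ℕ, (P lam (2*k)).eval 0 ≠ 0 := by
  intro k
  induction k with
  | zero => simp [hP0 lam hlam]
  | succ k ih =>
    have h := hrec lam hlam (2*k+1) (by omega)
    have h1 : 2*k+1-1 = 2*k := by omega
    have h2 : 2*k+1+1 = 2*(k+1) := by omega
    rw [h1, h2] at h
    rw [h]
    simp only [eval_sub, eval_mul, eval_X, eval_C, zero_mul, zero_sub, neg_ne_zero]
    exact mul_ne_zero (ne_of_gt (hβpos lam hlam (2*k+1) (by omega))) ih

include hm hmonic hdeg horth hP0 in
lemma ortho_lower {lam : ℝ} (hlam : -1 < lam) (n : ℕ) :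
    ∀ q : Polynomial ℝ, q.natDegree < n →
      ∫ x : ℝ, q.eval x * (P lam n).eval x * freudWeight m lam t x = 0 := by
  suffices h : ∀ d : ℕ, ∀ q : Polynomial ℝ, q.natDegree ≤ d → d < n →
      ∫ x : ℝ, q.eval x * (P lam n).eval x * freudWeight m lam t x = 0 by
    intro q hq
    exact h q.natDegree q le_rfl hq
  intro d
  induction d using Nat.strong_induction_on with
  | _ d IH =>
    intro q hqd hdn
    by_cases hq0 : q = 0
    · simp [hq0]
    set c := q.coeff d with hc
    set r := q - C c * P lam d with hr
    have hqe : ∀ x : ℝ, q.eval x = c * (P lam d).eval x + r.eval x := by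
      intro x; rw [hr]; simp only [eval_sub, eval_mul, eval_C]; ring
    have hsplit : (fun x : ℝ => q.eval x * (P lam n).eval x * freudWeight m lam t x)
        = fun x : ℝ => c * ((P lam d).eval x * (P lam n).eval x * freudWeight m lam t x)
            + r.eval x * (P lam n).eval x * freudWeight m lam t x := by
      funext x; rw [hqe x]; ring
    rw [hsplit, integral_add ((fw_pq_integrable hm hlam t _ _).const_mul c)
        (fw_pq_integrable hm hlam t _ _), integral_const_mul,
      horth lam hlam d n (by omega), mul_zero, zero_add]
    by_cases hr0 : r = 0
    · simp [hr0]
    · rcases Nat.eq_zero_or_pos d with rfl | hd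
      · exfalso
        apply hr0
        rw [hr, hP0 lam hlam, mul_one, Polynomial.eq_C_of_natDegree_le_zero hqd, hc]
        simp [coeff_C]
      · have hcoeffd : (P lam d).coeff d = 1 := by
          have := (hmonic lam hlam d).coeff_natDegree
          rwa [hdeg lam hlam d] at this
        have hrco : r.coeff d = 0 := by
          rw [hr, coeff_sub, coeff_C_mul, hcoeffd, mul_one, sub_self]
        have hrle : r.natDegree ≤ d := by
          refine le_trans (natDegree_sub_le _ _) ?_
          simp only [max_le_iff]
          exact ⟨hqd, le_trans (natDegree_C_mul_le _ _) (le_of_eq (hdeg lam hlam d))⟩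
        have hrlt : r.natDegree < d := by
          rcases lt_or_eq_of_le hrle with h | h
          · exact h
          · exfalso
            apply hr0
            apply Polynomial.leadingCoeff_eq_zero.mp
            rw [Polynomial.leadingCoeff, h, hrco]
        exact IH r.natDegree hrlt r le_rfl (by omega)

include hm in
lemma posdef {lam : ℝ} (hlam : -1 < lam) {q : Polynomial ℝ} (hq : q ≠ 0) :
    0 < ∫ x : ℝ, q.eval x * q.eval x * freudWeight m lam t x := by
  set f := fun x : ℝ => q.eval x * q.eval x * freudWeight m lam t x with hf
  have hnn : 0 ≤ f := fun x => mul_nonneg (mul_self_nonneg _) (fw_nonneg m lam t x)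
  have hint : Integrable f := fw_pq_integrable hm hlam t q q
  rw [integral_pos_iff_support_of_nonneg hnn hint]
  have hfin : ({x : ℝ | q.IsRoot x} ∪ {0}).Finite :=
    (Polynomial.finite_setOf_isRoot hq).union (Set.finite_singleton 0)
  have hsub : (Function.support f)ᶜ ⊆ ({x : ℝ | q.IsRoot x} ∪ {0}) := by
    intro x hx
    simp only [Set.mem_compl_iff, Function.mem_support, not_not] at hx
    by_contra hmem
    simp only [Set.mem_union, Set.mem_setOf_eq, Set.mem_singleton_iff, not_or,
      Polynomial.IsRoot] at hmem
    exact mul_ne_zero (mul_ne_zero hmem.1 hmem.1) (ne_of_gt (fw_pos m lam t hmem.2)) hx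
  have h0 : volume (Function.support f)ᶜ = 0 :=
    measure_mono_null hsub (hfin.measure_zero volume)
  by_contra hle
  push_neg at hle
  have h1 : volume (Function.support f) = 0 := le_antisymm (by simpa using hle) (by simp)
  have h2 : (volume : Measure ℝ) Set.univ = 0 := by
    have h3 := measure_union_le (μ := (volume : Measure ℝ))
      (Function.support f) (Function.support f)ᶜ
    rw [Set.union_compl_self, h1, h0] at h3
    simpa using h3  -- 
  simp at h2

include hP0 hP1 hrec in
lemma odd_int {lam lam' : ℝ} (hlam' : -1 < lam') (k : ℕ) :
    ∫ x : ℝ, x * (P lam' (2*k)).eval x * freudWeight m lam t x = 0 := by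
  have hpar := parity P β hP0 hP1 hrec hlam' (2*k)
  have hneg : ∀ x : ℝ, (-x) * (P lam' (2*k)).eval (-x) * freudWeight m lam t (-x)
      = -(x * (P lam' (2*k)).eval x * freudWeight m lam t x) := by
    intro x
    rw [hpar x, fw_even, (even_two_mul k).neg_one_pow]
    ring
  have h := integral_neg_eq_self
    (fun x : ℝ => x * (P lam' (2*k)).eval x * freudWeight m lam t x) volume
  simp only [hneg, integral_neg] at h
  linarith

include hm hmonic hdeg horth hβpos hP0 hP1 hrec in
lemma keylem {lam : ℝ} (hlam : -1 < lam) :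
    ∀ n : ℕ, P lam (2*n+1) = X * P (lam+1) (2*n) := by
  have hlam' : -1 < lam + 1 := by linarith
  intro n
  rcases Nat.eq_zero_or_pos n with rfl | hn
  · simp only [Nat.mul_zero, Nat.zero_add]
    rw [hP1 lam hlam, hP0 (lam+1) hlam', mul_one]
  · set Pl := P (lam+1) (2*n) with hPl
    set Q : Polynomial ℝ := X * Pl with hQ
    have hPlm : Pl.Monic := hmonic _ hlam' _
    have hQmonic : Q.Monic := monic_X.mul hPlm
    have hQdeg : Q.natDegree = 2*n+1 := by
      rw [hQ, natDegree_mul X_ne_zero hPlm.ne_zero, natDegree_X, hPl, hdeg _ hlam']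
      omega
    have claimA : ∀ q : Polynomial ℝ, q.natDegree ≤ 2*n →
        ∫ x : ℝ, q.eval x * Q.eval x * freudWeight m lam t x = 0 := by
      intro q hq
      have hqe : ∀ x : ℝ, q.eval x = x * q.divX.eval x + q.coeff 0 := by
        intro x
        conv_lhs => rw [← X_mul_divX_add q]
        rw [eval_add, eval_mul, eval_X, eval_C]
      have hsplit : (fun x : ℝ => q.eval x * Q.eval x * freudWeight m lam t x)
          = fun x : ℝ => q.divX.eval x * Pl.eval x * freudWeight m (lam+1) t x
              + q.coeff 0 * (x * Pl.eval x * freudWeight m lam t x) := by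
        funext x
        rw [hqe x, hQ]
        simp only [eval_mul, eval_X]
        rw [fw_shift m hlam t x]
        ring
      have hint1 : Integrable
          (fun x : ℝ => q.divX.eval x * Pl.eval x * freudWeight m (lam+1) t x) :=
        fw_pq_integrable hm hlam' t _ _
      have hint2 : Integrable (fun x : ℝ => x * Pl.eval x * freudWeight m lam t x) := by
        have h := fw_pq_integrable hm hlam t X Pl
        simpa [eval_X] using h
      have hdivX : q.divX.natDegree < 2*n := by
        have := natDegree_divX_eq_natDegree_tsub_one (p := q)
        omega
      rw [hsplit, integral_add hint1 (hint2.const_mul _), integral_const_mul,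
        ortho_lower m hm t P hmonic hdeg horth hP0 hlam' (2*n) q.divX hdivX,
        odd_int m t P β hP0 hP1 hrec hlam' n, mul_zero, add_zero]
    set D := P lam (2*n+1) - Q with hDdef
    have hD : D.natDegree ≤ 2*n := by
      rcases eq_or_ne D 0 with h | h
      · simp [h]
      · have hdP : (P lam (2*n+1)).degree = ((2*n+1 : ℕ) : WithBot ℕ) := by
          rw [degree_eq_natDegree (hmonic _ hlam _).ne_zero, hdeg _ hlam]
        have hdQ : Q.degree = ((2*n+1 : ℕ) : WithBot ℕ) := by
          rw [degree_eq_natDegree hQmonic.ne_zero, hQdeg]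
        have hdlt : D.degree < (P lam (2*n+1)).degree :=
          degree_sub_lt (by rw [hdP, hdQ]) (hmonic _ hlam _).ne_zero
            (by rw [(hmonic _ hlam _).leadingCoeff, hQmonic.leadingCoeff])
        rw [hdP] at hdlt
        have := (natDegree_lt_iff_degree_lt h).2 hdlt
        omega
    have hzero : ∫ x : ℝ, D.eval x * D.eval x * freudWeight m lam t x = 0 := by
      have h1 : ∫ x : ℝ, D.eval x * (P lam (2*n+1)).eval x * freudWeight m lam t x = 0 :=
        ortho_lower m hm t P hmonic hdeg horth hP0 hlam (2*n+1) D (by omega)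
      have h2 := claimA D hD
      have hsplit : (fun x : ℝ => D.eval x * D.eval x * freudWeight m lam t x)
          = fun x : ℝ => D.eval x * (P lam (2*n+1)).eval x * freudWeight m lam t x
              - D.eval x * Q.eval x * freudWeight m lam t x := by
        funext x
        rw [hDdef]
        simp only [eval_sub]
        ring
      rw [hsplit, integral_sub (fw_pq_integrable hm hlam t _ _)
        (fw_pq_integrable hm hlam t _ _), h1, h2, sub_zero]
    by_contra hne
    have hDne : D ≠ 0 := sub_ne_zero.2 hne
    exact absurd hzero (ne_of_gt (posdef m hm t hlam hDne))

end Main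

/-- For `λ > −1`, `t ∈ ℝ` and integer `m ≥ 2`, the monic orthogonal
polynomials of the generalised higher order Freud weight satisfy, for every `n ≥ 1`:
(i) `P_{2n+1}(x;λ) = P_{2n+1}(x;λ+1) + β_{2n}(λ+1) P_{2n−1}(x;λ+1)`, and
(ii) `P_{2n}(x;λ) = P_{2n}(x;λ+1)
      − (β_{2n}(λ) β_{2n−1}(λ+1) P_{2n−1}′(0;λ)/P_{2n+1}′(0;λ)) P_{2n−2}(x;λ+1)`. -/
theorem connection_relations (m : ℕ) (hm : 2 ≤ m) (t : ℝ)
    (P : ℝ → ℕ → Polynomial ℝ) (β : ℝ → ℕ → ℝ)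
    (hmonic : ∀ lam, -1 < lam → ∀ n, (P lam n).Monic)
    (hdeg : ∀ lam, -1 < lam → ∀ n, (P lam n).natDegree = n)
    (horth : ∀ lam, -1 < lam → ∀ j k, j ≠ k →
      ∫ x : ℝ, (P lam j).eval x * (P lam k).eval x * freudWeight m lam t x = 0)
    (hβpos : ∀ lam, -1 < lam → ∀ n, 1 ≤ n → 0 < β lam n)
    (hP0 : ∀ lam, -1 < lam → P lam 0 = 1) (hP1 : ∀ lam, -1 < lam → P lam 1 = X)
    (hrec : ∀ lam, -1 < lam → ∀ n, 1 ≤ n →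
      P lam (n + 1) = X * P lam n - C (β lam n) * P lam (n - 1)) :
    ∀ lam, -1 < lam → ∀ n : ℕ, 1 ≤ n →
      P lam (2 * n + 1) =
        P (lam + 1) (2 * n + 1) + C (β (lam + 1) (2 * n)) * P (lam + 1) (2 * n - 1) ∧
      P lam (2 * n) =
        P (lam + 1) (2 * n)
          - C (β lam (2 * n) * β (lam + 1) (2 * n - 1) *
              (derivative (P lam (2 * n - 1))).eval 0 /
                (derivative (P lam (2 * n + 1))).eval 0) * P (lam + 1) (2 * n - 2) := by
  intro lam hlam n hn
  have hlam' : -1 < lam + 1 := by linarith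
  have key := keylem m hm t P β hmonic hdeg horth hβpos hP0 hP1 hrec hlam
  have e1 := key n
  have e2 := hrec (lam+1) hlam' (2*n) (by omega)
  have e4 : P lam (2*n-1) = X * P (lam+1) (2*n-2) := by
    have h := key (n-1)
    rw [show 2*(n-1)+1 = 2*n-1 by omega, show 2*(n-1) = 2*n-2 by omega] at h
    exact h
  constructor
  · rw [e1, e2]
    ring
  · have e3 := hrec lam hlam (2*n) (by omega)
    have e5 : X * P (lam+1) (2*n) = X * (P lam (2*n) - C (β lam (2*n)) * P (lam+1) (2*n-2)) := by
      rw [← e1, e3, e4]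
      ring
    have e6 : P (lam+1) (2*n) = P lam (2*n) - C (β lam (2*n)) * P (lam+1) (2*n-2) :=
      mul_left_cancel₀ X_ne_zero e5
    have d2 : (derivative (P lam (2*n+1))).eval 0 = (P (lam+1) (2*n)).eval 0 := by
      rw [e1]
      simp [derivative_mul]
    have d1 : (derivative (P lam (2*n-1))).eval 0 = (P (lam+1) (2*n-2)).eval 0 := by
      rw [e4]
      simp [derivative_mul]
    have e7 := hrec (lam+1) hlam' (2*n-1) (by omega)
    rw [show 2*n-1+1 = 2*n by omega, show 2*n-1-1 = 2*n-2 by omega] at e7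
    have e8 : (P (lam+1) (2*n)).eval 0
        = -(β (lam+1) (2*n-1)) * (P (lam+1) (2*n-2)).eval 0 := by
      rw [e7]
      simp only [eval_sub, eval_mul, eval_X, eval_C, zero_mul, zero_sub]
      ring
    have hnz : (P (lam+1) (2*n-2)).eval 0 ≠ 0 := by
      have h := eval0_even_ne P β hβpos hP0 hrec hlam' (n-1)
      rwa [show 2*(n-1) = 2*n-2 by omega] at h
    have hb' : 0 < β (lam+1) (2*n-1) := hβpos _ hlam' _ (by omega)
    have hcoef : β lam (2*n) * β (lam+1) (2*n-1) * (derivative (P lam (2*n-1))).eval 0 /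
        (derivative (P lam (2*n+1))).eval 0 = -(β lam (2*n)) := by
      rw [d1, d2, e8]
      field_simp
    rw [hcoef, e6, map_neg]
    ring
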